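/- Under the stated data, if λMw < λMs and M has no nonstrong local survival phase, then λMs ≥ λNs. If in addition N also has no nonstrong local survival phase, then λNs = λMs and λNw = λMw. (Proposition 5.10, item (2).) -/
import Mathlib


/-- `λ₀` is a threshold for the family of extinction probability vectors `q`:
below `λ₀` extinction is almost sure, above `λ₀` there is survival with
positive probability from every site. -/
def IsThreshold {X : Type*} (q : ℝ → X → ℝ) (lam₀ : ℝ) : Prop :=
  (∀ lam : ℝ, lam < lam₀ → q lam = fun _ => 1) ∧
  (∀ lam : ℝ, lam₀ < lam → ∀ x, q lam x < 1)

/-- Sharp threshold: extinction is almost sure also at `λ₀` itself. -/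
def IsSharpThreshold {X : Type*} (q : ℝ → X → ℝ) (lam₀ : ℝ) : Prop :=
  (∀ lam : ℝ, lam ≤ lam₀ → q lam = fun _ => 1) ∧
  (∀ lam : ℝ, lam₀ < lam → ∀ x, q lam x < 1)

/-- The process with global extinction vectors `qX` and local extinction
vectors `qC` has a nonstrong local survival phase. -/
def HasNonstrongLocalPhase {X : Type*} (qX qC : ℝ → X → ℝ) : Prop :=
  ∃ lam : ℝ, 0 < lam ∧ qX lam < qC lam ∧ ∀ x, qC lam x < 1

private lemma pt_lt {X : Type*} [Nonempty X] {f g : X → ℝ} (h : ∀ x, f x < g x) : f < g :=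
  lt_of_le_of_ne (fun x => (h x).le)
    (fun he => absurd (congrFun he (Classical.arbitrary X)) (h _).ne)

theorem prop510_item2
    {X : Type*} [Nonempty X]
    (qMX qMC qNX qNC : ℝ → X → ℝ)
    (lMw lMs lNw lNs : ℝ)
    (hMw : 0 < lMw) (hMs : 0 < lMs) (hNw : 0 < lNw) (hNs : 0 < lNs)
    (htMw : IsThreshold qMX lMw) (htNw : IsThreshold qNX lNw)
    (htMs : IsSharpThreshold qMC lMs) (htNs : IsSharpThreshold qNC lNs)
    (hM : lMw ≤ lMs) (hN : lNw ≤ lNs)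
    (transfer : ∀ lam : ℝ, 0 < lam →
      (qMX lam = qMC lam ↔ qNX lam = qNC lam) ∧
      (qMX lam < qMC lam ↔ qNX lam < qNC lam) ∧
      (qMC lam < qMX lam ↔ qNC lam < qNX lam)) :
    (lMw < lMs → ¬ HasNonstrongLocalPhase qMX qMC →
      lNs ≤ lMs ∧
      (¬ HasNonstrongLocalPhase qNX qNC → lNs = lMs ∧ lNw = lMw)) := by
  intro hlt hMno
  -- First: lNw ≤ lMw
  have hNwMw : lNw ≤ lMw := by
    by_contra h
    push_neg at h
    obtain ⟨lam, h1, h2⟩ := exists_between (lt_min h hlt)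
    have hlamNw : lam < lNw := h2.trans_le (min_le_left _ _)
    have hlamMs : lam ≤ lMs := (h2.trans_le (min_le_right _ _)).le
    have hq : qMX lam < qMC lam := by
      rw [htMs.1 lam hlamMs]
      exact pt_lt (htMw.2 lam h1)
    have hn := ((transfer lam (hMw.trans h1)).2.1).mp hq
    rw [htNw.1 lam hlamNw, htNs.1 lam (hlamNw.le.trans hN)] at hn
    exact lt_irrefl _ hn
  -- lNs ≤ lMs
  have hNsMs : lNs ≤ lMs := by
    by_contra h
    push_neg at h
    obtain ⟨lam, h1, h2⟩ := exists_between h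
    have hlamNw : lNw < lam := (hNwMw.trans_lt (hlt.trans h1))
    have hq : qNX lam < qNC lam := by
      rw [htNs.1 lam h2.le]
      exact pt_lt (htNw.2 lam hlamNw)
    have hm := ((transfer lam (hMs.trans h1)).2.1).mpr hq
    exact hMno ⟨lam, hMs.trans h1, hm, htMs.2 lam h1⟩
  refine ⟨hNsMs, ?_⟩
  intro hNno
  have hs : lNs = lMs := by
    refine le_antisymm hNsMs ?_
    by_contra h
    push_neg at h
    obtain ⟨lam, h1, h2⟩ := exists_between (max_lt h hlt)
    have hlamNs : lNs < lam := (le_max_left _ _).trans_lt h1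
    have hlamMw : lMw < lam := (le_max_right _ _).trans_lt h1
    have hq : qMX lam < qMC lam := by
      rw [htMs.1 lam h2.le]
      exact pt_lt (htMw.2 lam hlamMw)
    have hn := ((transfer lam (hMw.trans hlamMw)).2.1).mp hq
    exact hNno ⟨lam, hNs.trans hlamNs, hn, htNs.2 lam hlamNs⟩
  have hw : lNw = lMw := by
    refine le_antisymm hNwMw ?_
    by_contra h
    push_neg at h
    have hNwNs : lNw < lNs := by rw [hs]; exact h.trans_le hM
    obtain ⟨lam, h1, h2⟩ := exists_between (lt_min h hNwNs)
    have hlamMw : lam < lMw := h2.trans_le (min_le_left _ _)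
    have hlamNs : lam < lNs := h2.trans_le (min_le_right _ _)
    have hq : qNX lam < qNC lam := by
      rw [htNs.1 lam hlamNs.le]
      exact pt_lt (htNw.2 lam h1)
    have hm := ((transfer lam (hNw.trans h1)).2.1).mpr hq
    rw [htMw.1 lam hlamMw, htMs.1 lam (hlamMw.le.trans hM)] at hm
    exact lt_irrefl _ hm
  exact ⟨hs, hw⟩
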